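/- For all continuous functions f, g : X → ℂ, all natural numbers k, l, and every (x,n) ∈ X×ℤ, one has ⟨M̃_f S̃^k (S̃*)^l M̃_g e_{(x,n)}, e_{(x,n)}⟩ = δ_{k,l}·f(x)·(I_k(x))^{-1}·g(x), where δ_{k,l} is the Kronecker symbol. -/

import Mathlib

open Classical

noncomputable section

/-- `ℓ²(X×ℤ)`: the Hilbert space of square-summable complex families indexed by `X × ℤ`. -/
abbrev l2Z (X : Type*) : Type _ := lp (fun _ : X × ℤ => ℂ) 2

/-- The orthonormal basis vector `e_{(x,n)}` of `ℓ²(X×ℤ)`. -/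
def e {X : Type*} (p : X × ℤ) : l2Z X := lp.single 2 p 1

/-- `I_k(x) = ∏_{j=1}^{k} ℒ(1)(T^j(x))`, where `ℒ(1)(x) = card (T⁻¹({x}))`
(with `I_0 = 1`). -/
def Ik {X : Type*} (T : X → X) (k : ℕ) (x : X) : ℝ :=
  ∏ j ∈ Finset.range k, (Nat.card (T ⁻¹' {T^[j + 1] x}) : ℝ)

end

open scoped InnerProductSpace ComplexConjugate

section aux

variable {X : Type*}

lemma e_apply (p q : X × ℤ) : (e p : ∀ _ : X × ℤ, ℂ) q = if q = p then 1 else 0 := by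
  simp [e, lp.single_apply, Pi.single_apply]

lemma inner_e_e (p q : X × ℤ) : ⟪e p, e q⟫_ℂ = if q = p then 1 else 0 := by
  rw [e, lp.inner_single_left]
  simp [e_apply, eq_comm]

lemma inner_e_left (p : X × ℤ) (u : l2Z X) :
    ⟪e p, u⟫_ℂ = (u : ∀ _ : X × ℤ, ℂ) p := by
  rw [e, lp.inner_single_left]
  simp [RCLike.inner_apply]

lemma ext_inner_e {u v : l2Z X} (h : ∀ q : X × ℤ, ⟪e q, u⟫_ℂ = ⟪e q, v⟫_ℂ) : u = v := by
  apply lp.ext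
  funext q
  have := h q
  rwa [inner_e_left, inner_e_left] at this

lemma Ik_nonneg (T : X → X) (k : ℕ) (x : X) : 0 ≤ Ik T k x :=
  Finset.prod_nonneg fun _ _ => Nat.cast_nonneg _

lemma M_adjoint_e (Mf : l2Z X →L[ℂ] l2Z X) (f : X → ℂ)
    (hMf : ∀ p : X × ℤ, Mf (e p) = f p.1 • e p) (p : X × ℤ) :
    (ContinuousLinearMap.adjoint Mf) (e p) = (conj (f p.1)) • e p := by
  apply ext_inner_e
  intro q
  rw [ContinuousLinearMap.adjoint_inner_right, hMf q, inner_smul_left, inner_smul_right,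
    inner_e_e]
  by_cases h : p = q
  · subst h; ring
  · simp [h]

variable [TopologicalSpace X] [CompactSpace X] [T2Space X] {T : X → X}

lemma fiber_finite (hT : IsCoveringMap T) (x : X) : (T ⁻¹' {x}).Finite := by
  have hd : DiscreteTopology (T ⁻¹' {x} : Set X) := (hT x).1
  have hc : IsCompact (T ⁻¹' {x}) :=
    (isClosed_singleton.preimage hT.continuous).isCompact
  exact hc.finite (isDiscrete_iff_discreteTopology.mpr hd)

lemma St_adjoint_e (hT : IsCoveringMap T) (St : l2Z X →L[ℂ] l2Z X)
    (hSt : ∀ (x : X) (n : ℤ), St (e (x, n)) =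
      (((Real.sqrt (Nat.card (T ⁻¹' {x})))⁻¹ : ℝ) : ℂ) • ∑ᶠ y ∈ T ⁻¹' {x}, e (y, n + 1))
    (x : X) (n : ℤ) :
    (ContinuousLinearMap.adjoint St) (e (x, n)) =
      (((Real.sqrt (Nat.card (T ⁻¹' {T x})))⁻¹ : ℝ) : ℂ) • e (T x, n - 1) := by
  apply ext_inner_e
  rintro ⟨y, m⟩
  rw [ContinuousLinearMap.adjoint_inner_right, hSt y m]
  have hfin := fiber_finite hT y
  rw [finsum_mem_eq_finite_toFinset_sum _ hfin]
  rw [inner_smul_left, sum_inner, inner_smul_right]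
  simp only [inner_e_e]
  have hsum : (∑ z ∈ hfin.toFinset, (if (x, n) = (z, m + 1) then (1 : ℂ) else 0)) =
      if n = m + 1 ∧ T x = y then 1 else 0 := by
    by_cases hn : n = m + 1
    · subst hn
      simp only [Prod.mk.injEq, and_true, true_and]
      rw [Finset.sum_ite_eq hfin.toFinset x (fun _ => (1 : ℂ))]
      simp [Set.Finite.mem_toFinset, eq_comm]
    · simp only [Prod.mk.injEq]
      rw [if_neg (by tauto)]
      apply Finset.sum_eq_zero
      intro z _
      rw [if_neg (by tauto)]
  rw [hsum]
  by_cases h : (T x, n - 1) = (y, m)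
  · rw [if_pos h]
    have h1 : T x = y := congrArg Prod.fst h
    have h2 : n - 1 = m := congrArg Prod.snd h
    rw [if_pos ⟨by omega, h1⟩]
    subst h1
    simp [Complex.conj_ofReal]
  · rw [if_neg h, mul_zero, if_neg, mul_zero]
    rintro ⟨h1, h2⟩
    exact h (by rw [Prod.mk.injEq]; exact ⟨h2, by omega⟩)

lemma St_adjoint_pow_e (hT : IsCoveringMap T) (St : l2Z X →L[ℂ] l2Z X)
    (hSt : ∀ (x : X) (n : ℤ), St (e (x, n)) =
      (((Real.sqrt (Nat.card (T ⁻¹' {x})))⁻¹ : ℝ) : ℂ) • ∑ᶠ y ∈ T ⁻¹' {x}, e (y, n + 1))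
    (l : ℕ) (x : X) (n : ℤ) :
    ((ContinuousLinearMap.adjoint St) ^ l) (e (x, n)) =
      (((Real.sqrt (Ik T l x))⁻¹ : ℝ) : ℂ) • e (T^[l] x, n - l) := by
  induction l generalizing x n with
  | zero => simp [Ik]
  | succ l ih =>
      have hIk : Ik T (l + 1) x = Ik T l (T x) * (Nat.card (T ⁻¹' {T x}) : ℝ) := by
        rw [Ik, Ik, Finset.prod_range_succ']
        simp [Function.iterate_succ_apply]
      have hpair : ((T^[l] (T x) : X), (n - 1 - (l : ℤ))) = (T^[l + 1] x, n - ((l + 1 : ℕ) : ℤ)) := by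
        rw [← Function.iterate_succ_apply]
        congr 1
        push_cast; ring
      have hscal : (((Real.sqrt (Nat.card (T ⁻¹' {T x})))⁻¹ : ℝ) : ℂ) *
          (((Real.sqrt (Ik T l (T x)))⁻¹ : ℝ) : ℂ) = (((Real.sqrt (Ik T (l + 1) x))⁻¹ : ℝ) : ℂ) := by
        rw [← Complex.ofReal_mul]
        congr 1
        rw [hIk, Real.sqrt_mul (Ik_nonneg T l (T x)), mul_inv, mul_comm]
      rw [pow_succ, ContinuousLinearMap.mul_apply, St_adjoint_e hT St hSt, map_smul, ih,
        smul_smul, hscal, hpair]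

end aux

open ContinuousLinearMap in
/-- Let `X` be a compact Hausdorff space, `T : X → X` a covering map and
`S̃` the bounded operator on `ℓ²(X×ℤ)` with
`S̃ e_{(x,n)} = (ℒ(1)(x))^{-1/2} ∑_{y ∈ T⁻¹({x})} e_{(y,n+1)}`. For all continuous
`f, g : X → ℂ`, all `k, l ∈ ℕ` and every `(x,n) ∈ X×ℤ` one has
`⟨M̃_f S̃^k (S̃*)^l M̃_g e_{(x,n)}, e_{(x,n)}⟩ = δ_{k,l}·f(x)·(I_k(x))⁻¹·g(x)`
(the paper's inner product is linear in the first variable, so it is here rendered as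
Mathlib's `inner` with the arguments swapped). -/
theorem diagonal_matrix_entry {X : Type*} [TopologicalSpace X] [CompactSpace X] [T2Space X]
    (T : X → X) (hT : IsCoveringMap T) (hTsurj : Function.Surjective T)
    (St : l2Z X →L[ℂ] l2Z X)
    (hSt : ∀ (x : X) (n : ℤ), St (e (x, n)) =
      (((Real.sqrt (Nat.card (T ⁻¹' {x})))⁻¹ : ℝ) : ℂ) • ∑ᶠ y ∈ T ⁻¹' {x}, e (y, n + 1)) :
    ∀ f g : C(X, ℂ), ∀ Mf Mg : l2Z X →L[ℂ] l2Z X,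
      (∀ p : X × ℤ, Mf (e p) = f p.1 • e p) →
      (∀ p : X × ℤ, Mg (e p) = g p.1 • e p) →
      ∀ (k l : ℕ) (x : X) (n : ℤ),
        @inner ℂ _ _ (e (x, n))
            ((Mf ∘L (St ^ k) ∘L ((adjoint St) ^ l) ∘L Mg) (e (x, n))) =
          (if k = l then 1 else 0) * f x * ((Ik T k x : ℝ) : ℂ)⁻¹ * g x := by
  intro f g Mf Mg hMf hMg k l x n
  rw [ContinuousLinearMap.comp_apply, ContinuousLinearMap.comp_apply,
    ContinuousLinearMap.comp_apply, hMg (x, n), map_smul, St_adjoint_pow_e hT St hSt,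
    map_smul, map_smul, map_smul, map_smul, inner_smul_right, inner_smul_right,
    ← ContinuousLinearMap.adjoint_inner_left Mf, M_adjoint_e Mf f hMf, inner_smul_left,
    ← ContinuousLinearMap.adjoint_inner_left (St ^ k),
    ← ContinuousLinearMap.star_eq_adjoint (St ^ k), star_pow,
    ContinuousLinearMap.star_eq_adjoint, St_adjoint_pow_e hT St hSt, inner_smul_left,
    inner_e_e]
  simp only [RingHomCompTriple.comp_apply, RingHom.id_apply, starRingEnd_self_apply,
    Complex.conj_ofReal]
  by_cases hkl : k = l
  · subst hkl
    rw [if_pos rfl, if_pos rfl]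
    have : (((Real.sqrt (Ik T k x))⁻¹ : ℝ) : ℂ) * (((Real.sqrt (Ik T k x))⁻¹ : ℝ) : ℂ) =
        ((Ik T k x : ℝ) : ℂ)⁻¹ := by
      rw [← Complex.ofReal_mul, ← mul_inv, Real.mul_self_sqrt (Ik_nonneg T k x),
        Complex.ofReal_inv]
    calc g x * ((((Real.sqrt (Ik T k x))⁻¹ : ℝ) : ℂ) * (f x * ((((Real.sqrt (Ik T k x))⁻¹ : ℝ) : ℂ) * 1)))
        = ((((Real.sqrt (Ik T k x))⁻¹ : ℝ) : ℂ) * (((Real.sqrt (Ik T k x))⁻¹ : ℝ) : ℂ)) * f x * g x := by ring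
      _ = 1 * f x * ((Ik T k x : ℝ) : ℂ)⁻¹ * g x := by rw [this]; ring
  · have hne : ((T^[l] x : X), n - (l : ℤ)) ≠ (T^[k] x, n - (k : ℤ)) := by
      intro h
      have := congrArg Prod.snd h
      simp only at this
      omega
    rw [if_neg hne, if_neg hkl]
    ring
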